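/- Vanishing state-dependent transfer entropy under conditional independence: if p(z|x,y) = p(z|y) for all (x,y) with p(x,y) > 0, then I_pr(X↘Y;Z) = I(Z;X), and the synergistic partial information vanishes: I(Z;X,Y) − I(Z;X) − I(Z;Y) + I_red(Z;X,Y) = 0. -/

import Mathlib

open scoped BigOperators

/-- `p` is a probability mass function on a finite type. -/
def IsPMF {α : Type*} [Fintype α] (p : α → ℝ) : Prop :=
  (∀ a, 0 ≤ p a) ∧ ∑ a, p a = 1

/-- Kullback–Leibler divergence `D(u‖v) = Σ u log (u/v)` (with the convention `0 log 0 = 0`),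
`⊤` if absolute continuity fails, i.e. if `u a > 0 = v a` for some `a`. -/
noncomputable def klDiv {α : Type*} [Fintype α] (u v : α → ℝ) : EReal :=
  if ∀ a, 0 < u a → 0 < v a then ((∑ a, u a * Real.log (u a / v a) : ℝ) : EReal) else ⊤

variable {𝓧 𝓨 𝓩 : Type*} [Fintype 𝓧] [Fintype 𝓨] [Fintype 𝓩]

/-- Marginal distribution of the first variable `X`. -/
noncomputable def margX (p : 𝓧 × 𝓨 × 𝓩 → ℝ) (x : 𝓧) : ℝ := ∑ y, ∑ z, p (x, y, z)

/-- Marginal distribution of the second variable `Y`. -/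
noncomputable def margY (p : 𝓧 × 𝓨 × 𝓩 → ℝ) (y : 𝓨) : ℝ := ∑ x, ∑ z, p (x, y, z)

/-- Marginal distribution of the third variable `Z`. -/
noncomputable def margZ (p : 𝓧 × 𝓨 × 𝓩 → ℝ) (z : 𝓩) : ℝ := ∑ x, ∑ y, p (x, y, z)

/-- Joint marginal `p(x,z)`. -/
noncomputable def margXZ (p : 𝓧 × 𝓨 × 𝓩 → ℝ) (x : 𝓧) (z : 𝓩) : ℝ := ∑ y, p (x, y, z)

/-- Joint marginal `p(y,z)`. -/
noncomputable def margYZ (p : 𝓧 × 𝓨 × 𝓩 → ℝ) (y : 𝓨) (z : 𝓩) : ℝ := ∑ x, p (x, y, z)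

/-- Joint marginal `p(x,y)`. -/
noncomputable def margXY (p : 𝓧 × 𝓨 × 𝓩 → ℝ) (x : 𝓧) (y : 𝓨) : ℝ := ∑ z, p (x, y, z)

/-- Conditional distribution `p(·|x)` of `Z` given `X = x`. -/
noncomputable def condX (p : 𝓧 × 𝓨 × 𝓩 → ℝ) (x : 𝓧) : 𝓩 → ℝ :=
  fun z => margXZ p x z / margX p x

/-- Conditional distribution `p(·|y)` of `Z` given `Y = y`. -/
noncomputable def condY (p : 𝓧 × 𝓨 × 𝓩 → ℝ) (y : 𝓨) : 𝓩 → ℝ :=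
  fun z => margYZ p y z / margY p y

/-- Conditional distribution `p(·|x,y)` of `Z` given `(X,Y) = (x,y)`. -/
noncomputable def condXY (p : 𝓧 × 𝓨 × 𝓩 → ℝ) (x : 𝓧) (y : 𝓨) : 𝓩 → ℝ :=
  fun z => p (x, y, z) / margXY p x y

/-- `C_X`: the convex hull of the conditionals `{p(·|x) : p(x) > 0}`. -/
noncomputable def CXhull (p : 𝓧 × 𝓨 × 𝓩 → ℝ) : Set (𝓩 → ℝ) :=
  convexHull ℝ {q | ∃ x, 0 < margX p x ∧ q = condX p x}

/-- `C_Y`: the convex hull of the conditionals `{p(·|y) : p(y) > 0}`. -/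
noncomputable def CYhull (p : 𝓧 × 𝓨 × 𝓩 → ℝ) : Set (𝓩 → ℝ) :=
  convexHull ℝ {q | ∃ y, 0 < margY p y ∧ q = condY p y}

/-- Mutual information `I(Z;X)` (terms with `p(x,z) = 0` vanish). -/
noncomputable def miZX (p : 𝓧 × 𝓨 × 𝓩 → ℝ) : ℝ :=
  ∑ x, ∑ z, margXZ p x z * Real.log (margXZ p x z / (margX p x * margZ p z))

/-- Mutual information `I(Z;Y)`. -/
noncomputable def miZY (p : 𝓧 × 𝓨 × 𝓩 → ℝ) : ℝ :=
  ∑ y, ∑ z, margYZ p y z * Real.log (margYZ p y z / (margY p y * margZ p z))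

/-- Mutual information `I(Z;X,Y)` between `Z` and the joint variable `(X,Y)`. -/
noncomputable def miZXY (p : 𝓧 × 𝓨 × 𝓩 → ℝ) : ℝ :=
  ∑ x, ∑ y, ∑ z, p (x, y, z) * Real.log (p (x, y, z) / (margXY p x y * margZ p z))

/-- Projected information `I_pr(X ↘ Y; Z) =
`Σ_{x : p(x)>0} p(x)·[D(p(·|x)‖p_Z) − inf_{q ∈ C_Y} D(p(·|x)‖q)]`. -/
noncomputable def IprXY (p : 𝓧 × 𝓨 × 𝓩 → ℝ) : ℝ :=
  ∑ x, if 0 < margX p x then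
      margX p x * ((klDiv (condX p x) (margZ p)).toReal -
        (⨅ q ∈ CYhull p, klDiv (condX p x) q).toReal)
    else 0

/-- Projected information `I_pr(Y ↘ X; Z)`. -/
noncomputable def IprYX (p : 𝓧 × 𝓨 × 𝓩 → ℝ) : ℝ :=
  ∑ y, if 0 < margY p y then
      margY p y * ((klDiv (condY p y) (margZ p)).toReal -
        (⨅ q ∈ CXhull p, klDiv (condY p y) q).toReal)
    else 0

/-- Redundant information `I_red(Z;X,Y) = min {I_pr(X↘Y;Z), I_pr(Y↘X;Z)}`. -/
noncomputable def Ired (p : 𝓧 × 𝓨 × 𝓩 → ℝ) : ℝ := min (IprXY p) (IprYX p)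

section Aux

variable {𝓧' 𝓨' 𝓩' : Type*} [Fintype 𝓧'] [Fintype 𝓨'] [Fintype 𝓩']
variable {p : 𝓧' × 𝓨' × 𝓩' → ℝ}

/-! ### Nonnegativity of marginals -/

lemma margX_nonneg (h0 : ∀ a, 0 ≤ p a) (x : 𝓧') : 0 ≤ margX p x :=
  Finset.sum_nonneg fun _ _ => Finset.sum_nonneg fun _ _ => h0 _

lemma margY_nonneg (h0 : ∀ a, 0 ≤ p a) (y : 𝓨') : 0 ≤ margY p y :=
  Finset.sum_nonneg fun _ _ => Finset.sum_nonneg fun _ _ => h0 _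

lemma margZ_nonneg (h0 : ∀ a, 0 ≤ p a) (z : 𝓩') : 0 ≤ margZ p z :=
  Finset.sum_nonneg fun _ _ => Finset.sum_nonneg fun _ _ => h0 _

lemma margXZ_nonneg (h0 : ∀ a, 0 ≤ p a) (x : 𝓧') (z : 𝓩') : 0 ≤ margXZ p x z :=
  Finset.sum_nonneg fun _ _ => h0 _

lemma margYZ_nonneg (h0 : ∀ a, 0 ≤ p a) (y : 𝓨') (z : 𝓩') : 0 ≤ margYZ p y z :=
  Finset.sum_nonneg fun _ _ => h0 _

lemma margXY_nonneg (h0 : ∀ a, 0 ≤ p a) (x : 𝓧') (y : 𝓨') : 0 ≤ margXY p x y :=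
  Finset.sum_nonneg fun _ _ => h0 _

/-! ### Comparison of marginals -/

lemma margXZ_le_margX (h0 : ∀ a, 0 ≤ p a) (x : 𝓧') (z : 𝓩') : margXZ p x z ≤ margX p x :=
  Finset.sum_le_sum fun y _ =>
    Finset.single_le_sum (fun z' _ => h0 (x, y, z')) (Finset.mem_univ z)

lemma margXZ_le_margZ (h0 : ∀ a, 0 ≤ p a) (x : 𝓧') (z : 𝓩') : margXZ p x z ≤ margZ p z :=
  Finset.single_le_sum (f := fun x' => ∑ y, p (x', y, z))
    (fun x' _ => Finset.sum_nonneg fun _ _ => h0 _) (Finset.mem_univ x)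

lemma margYZ_le_margY (h0 : ∀ a, 0 ≤ p a) (y : 𝓨') (z : 𝓩') : margYZ p y z ≤ margY p y :=
  Finset.sum_le_sum fun x _ =>
    Finset.single_le_sum (fun z' _ => h0 (x, y, z')) (Finset.mem_univ z)

lemma margYZ_le_margZ (h0 : ∀ a, 0 ≤ p a) (y : 𝓨') (z : 𝓩') : margYZ p y z ≤ margZ p z :=
  Finset.sum_le_sum fun x _ =>
    Finset.single_le_sum (fun y' _ => h0 (x, y', z)) (Finset.mem_univ y)

lemma margXY_le_margX (h0 : ∀ a, 0 ≤ p a) (x : 𝓧') (y : 𝓨') : margXY p x y ≤ margX p x :=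
  Finset.single_le_sum (f := fun y' => ∑ z, p (x, y', z))
    (fun y' _ => Finset.sum_nonneg fun _ _ => h0 _) (Finset.mem_univ y)

lemma margXY_le_margY (h0 : ∀ a, 0 ≤ p a) (x : 𝓧') (y : 𝓨') : margXY p x y ≤ margY p y :=
  Finset.single_le_sum (f := fun x' => ∑ z, p (x', y, z))
    (fun x' _ => Finset.sum_nonneg fun _ _ => h0 _) (Finset.mem_univ x)

lemma p_le_margXY (h0 : ∀ a, 0 ≤ p a) (x : 𝓧') (y : 𝓨') (z : 𝓩') :
    p (x, y, z) ≤ margXY p x y :=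
  Finset.single_le_sum (fun z' _ => h0 (x, y, z')) (Finset.mem_univ z)

lemma p_le_margXZ (h0 : ∀ a, 0 ≤ p a) (x : 𝓧') (y : 𝓨') (z : 𝓩') :
    p (x, y, z) ≤ margXZ p x z :=
  Finset.single_le_sum (fun y' _ => h0 (x, y', z)) (Finset.mem_univ y)

lemma sum_margXZ (p : 𝓧' × 𝓨' × 𝓩' → ℝ) (x : 𝓧') : ∑ z, margXZ p x z = margX p x :=
  Finset.sum_comm

lemma sum_margYZ (p : 𝓧' × 𝓨' × 𝓩' → ℝ) (y : 𝓨') : ∑ z, margYZ p y z = margY p y :=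
  Finset.sum_comm

/-! ### Conditional distributions are PMFs -/

lemma condX_nonneg (h0 : ∀ a, 0 ≤ p a) (x : 𝓧') (z : 𝓩') : 0 ≤ condX p x z :=
  div_nonneg (margXZ_nonneg h0 x z) (margX_nonneg h0 x)

lemma condY_nonneg (h0 : ∀ a, 0 ≤ p a) (y : 𝓨') (z : 𝓩') : 0 ≤ condY p y z :=
  div_nonneg (margYZ_nonneg h0 y z) (margY_nonneg h0 y)

lemma condX_sum {x : 𝓧'} (hx : 0 < margX p x) : ∑ z, condX p x z = 1 := by
  unfold condX
  rw [← Finset.sum_div, sum_margXZ, div_self hx.ne']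

lemma condY_sum {y : 𝓨'} (hy : 0 < margY p y) : ∑ z, condY p y z = 1 := by
  unfold condY
  rw [← Finset.sum_div, sum_margYZ, div_self hy.ne']

/-- Members of the convex hull of a set of PMFs are PMFs. -/
lemma pmf_of_mem_hull {S : Set (𝓩' → ℝ)}
    (hS : ∀ q ∈ S, (∀ z, 0 ≤ q z) ∧ ∑ z, q z = 1) {q : 𝓩' → ℝ}
    (hq : q ∈ convexHull ℝ S) : (∀ z, 0 ≤ q z) ∧ ∑ z, q z = 1 := by
  have hsub : convexHull ℝ S ⊆ {f : 𝓩' → ℝ | (∀ z, 0 ≤ f z) ∧ ∑ z, f z = 1} := by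
    apply convexHull_min hS
    intro f hf g hg a b ha hb hab
    refine ⟨fun z => add_nonneg (mul_nonneg ha (hf.1 z)) (mul_nonneg hb (hg.1 z)), ?_⟩
    simp only [Pi.add_apply, Pi.smul_apply, smul_eq_mul]
    rw [Finset.sum_add_distrib, ← Finset.mul_sum, ← Finset.mul_sum, hf.2, hg.2]
    simpa using hab
  exact hsub hq

lemma pmf_of_mem_CYhull (h0 : ∀ a, 0 ≤ p a) {q : 𝓩' → ℝ} (hq : q ∈ CYhull p) :
    (∀ z, 0 ≤ q z) ∧ ∑ z, q z = 1 := by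
  refine pmf_of_mem_hull ?_ hq
  rintro f ⟨y, hy, rfl⟩
  exact ⟨condY_nonneg h0 y, condY_sum hy⟩

lemma pmf_of_mem_CXhull (h0 : ∀ a, 0 ≤ p a) {q : 𝓩' → ℝ} (hq : q ∈ CXhull p) :
    (∀ z, 0 ≤ q z) ∧ ∑ z, q z = 1 := by
  refine pmf_of_mem_hull ?_ hq
  rintro f ⟨x, hx, rfl⟩
  exact ⟨condX_nonneg h0 x, condX_sum hx⟩

/-! ### KL divergence basics -/

lemma klDiv_eq_coe {α : Type*} [Fintype α] {u v : α → ℝ} (h : ∀ a, 0 < u a → 0 < v a) :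
    klDiv u v = ((∑ a, u a * Real.log (u a / v a) : ℝ) : EReal) := if_pos h

lemma klDiv_self {α : Type*} [Fintype α] (u : α → ℝ) : klDiv u u = 0 := by
  rw [klDiv_eq_coe (fun a h => h)]
  have : ∑ a, u a * Real.log (u a / u a) = 0 := by
    apply Finset.sum_eq_zero
    intro a _
    rcases eq_or_ne (u a) 0 with h | h
    · simp [h]
    · simp [div_self h]
  rw [this, EReal.coe_zero]

lemma klDiv_nonneg {α : Type*} [Fintype α] {u v : α → ℝ}
    (hu0 : ∀ a, 0 ≤ u a) (hu1 : ∑ a, u a = 1)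
    (hv0 : ∀ a, 0 ≤ v a) (hv1 : ∑ a, v a ≤ 1) : 0 ≤ klDiv u v := by
  unfold klDiv
  split
  · rename_i h
    rw [← EReal.coe_zero, EReal.coe_le_coe_iff]
    have key : ∀ a, u a - v a ≤ u a * Real.log (u a / v a) := by
      intro a
      rcases eq_or_lt_of_le (hu0 a) with h0 | h0
      · rw [← h0]
        simpa using hv0 a
      · have hva := h a h0
        have hlog := Real.log_le_sub_one_of_pos (div_pos hva h0)
        have h1 : Real.log (u a / v a) = - Real.log (v a / u a) := by
          rw [← Real.log_inv]
          congr 1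
          rw [inv_div]
        have h3 : u a * (v a / u a) = v a := by
          field_simp
        have h2 : u a * Real.log (v a / u a) ≤ v a - u a := by
          have := mul_le_mul_of_nonneg_left hlog h0.le
          rw [mul_sub, mul_one, h3] at this
          linarith
        rw [h1, mul_neg]
        linarith
    calc (0:ℝ) = ∑ a, u a - ∑ a, v a + (∑ a, v a - 1) + (1 - ∑ a, u a) := by ring
      _ ≤ ∑ a, u a - ∑ a, v a := by rw [hu1]; linarith
      _ = ∑ a, (u a - v a) := (Finset.sum_sub_distrib _ _).symm
      _ ≤ _ := Finset.sum_le_sum fun a _ => key a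
  · exact le_top

/-! ### The Markov-chain key identity -/

lemma markov_key (h0 : ∀ a, 0 ≤ p a)
    (hci : ∀ x y, 0 < margXY p x y → ∀ z, condXY p x y z = condY p y z)
    (x : 𝓧') (y : 𝓨') (z : 𝓩') :
    p (x, y, z) * margY p y = margXY p x y * margYZ p y z := by
  rcases (margXY_nonneg h0 x y).lt_or_eq with hxy | hxy
  · have hy : 0 < margY p y := hxy.trans_le (margXY_le_margY h0 x y)
    have hh := hci x y hxy z
    unfold condXY condY at hh
    rw [div_eq_div_iff hxy.ne' hy.ne'] at hh
    linarith
  · have hz : p (x, y, z) = 0 :=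
      le_antisymm (hxy ▸ p_le_margXY h0 x y z) (h0 _)
    rw [hz, ← hxy]
    ring

/-! ### `condX p x ∈ CYhull p` under the Markov condition -/

lemma condX_mem_CYhull (h0 : ∀ a, 0 ≤ p a)
    (hk : ∀ x y z, p (x, y, z) * margY p y = margXY p x y * margYZ p y z)
    {x : 𝓧'} (hx : 0 < margX p x) : condX p x ∈ CYhull p := by
  classical
  set t : Finset 𝓨' := Finset.univ.filter (fun y => 0 < margXY p x y) with ht
  have hw0 : ∀ y ∈ t, 0 ≤ margXY p x y := fun y _ => margXY_nonneg h0 x y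
  have hwsum : ∑ y ∈ t, margXY p x y = margX p x := by
    rw [ht, Finset.sum_filter_of_ne]
    · rfl
    · intro y _ hne
      exact (margXY_nonneg h0 x y).lt_of_ne' hne
  have hws : 0 < ∑ y ∈ t, margXY p x y := hwsum ▸ hx
  have hmem : ∀ y ∈ t, condY p y ∈ {q : 𝓩' → ℝ | ∃ y', 0 < margY p y' ∧ q = condY p y'} := by
    intro y hy
    have hxy : 0 < margXY p x y := (Finset.mem_filter.mp hy).2
    exact ⟨y, hxy.trans_le (margXY_le_margY h0 x y), rfl⟩
  have hcm := Finset.centerMass_mem_convexHull t hw0 hws hmem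
  have heq : t.centerMass (fun y => margXY p x y) (fun y => condY p y) = condX p x := by
    funext z
    rw [Finset.centerMass, hwsum]
    simp only [Finset.sum_apply, Pi.smul_apply, smul_eq_mul]
    have hterm : ∀ y ∈ t, margXY p x y * condY p y z = p (x, y, z) := by
      intro y hy
      have hxy : 0 < margXY p x y := (Finset.mem_filter.mp hy).2
      have hy' : 0 < margY p y := hxy.trans_le (margXY_le_margY h0 x y)
      unfold condY
      rw [mul_div_assoc', div_eq_iff hy'.ne']
      exact (hk x y z).symm
    rw [Finset.sum_congr rfl hterm]
    have hs : ∑ y ∈ t, p (x, y, z) = margXZ p x z := by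
      rw [ht, Finset.sum_filter_of_ne]
      · rfl
      · intro y _ hne
        have hpz : 0 < p (x, y, z) := (h0 _).lt_of_ne' hne
        exact hpz.trans_le (p_le_margXY h0 x y z)
    rw [hs]
    unfold condX
    rw [inv_mul_eq_div]
  rwa [heq] at hcm

end Aux

section Main

variable {𝓧' 𝓨' 𝓩' : Type*} [Fintype 𝓧'] [Fintype 𝓨'] [Fintype 𝓩']
variable {p : 𝓧' × 𝓨' × 𝓩' → ℝ}

lemma klDiv_condX_margZ_toReal (h0 : ∀ a, 0 ≤ p a) {x : 𝓧'} (hx : 0 < margX p x) :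
    margX p x * (klDiv (condX p x) (margZ p)).toReal
      = ∑ z, margXZ p x z * Real.log (margXZ p x z / (margX p x * margZ p z)) := by
  have hac : ∀ z, 0 < condX p x z → 0 < margZ p z := by
    intro z hz
    have h1 : 0 < margXZ p x z := by
      by_contra hcon
      have : margXZ p x z = 0 := le_antisymm (not_lt.mp hcon) (margXZ_nonneg h0 x z)
      rw [condX, this, zero_div] at hz
      exact lt_irrefl 0 hz
    exact h1.trans_le (margXZ_le_margZ h0 x z)
  rw [klDiv_eq_coe hac, EReal.toReal_coe, Finset.mul_sum]
  apply Finset.sum_congr rfl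
  intro z _
  unfold condX
  rw [div_div, ← mul_assoc, ← mul_div_assoc, mul_div_cancel_left₀ _ hx.ne']

lemma iInf_klDiv_CYhull_eq_zero (h0 : ∀ a, 0 ≤ p a)
    (hk : ∀ x y z, p (x, y, z) * margY p y = margXY p x y * margYZ p y z)
    {x : 𝓧'} (hx : 0 < margX p x) :
    (⨅ q ∈ CYhull p, klDiv (condX p x) q) = 0 := by
  apply le_antisymm
  · calc (⨅ q ∈ CYhull p, klDiv (condX p x) q) ≤ klDiv (condX p x) (condX p x) :=
        iInf₂_le _ (condX_mem_CYhull h0 hk hx)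
      _ = 0 := klDiv_self _
  · refine le_iInf₂ fun q hq => ?_
    obtain ⟨hq0, hq1⟩ := pmf_of_mem_CYhull h0 hq
    exact klDiv_nonneg (condX_nonneg h0 x) (condX_sum hx) hq0 hq1.le

lemma IprXY_eq_miZX (h0 : ∀ a, 0 ≤ p a)
    (hk : ∀ x y z, p (x, y, z) * margY p y = margXY p x y * margYZ p y z) :
    IprXY p = miZX p := by
  unfold IprXY miZX
  apply Finset.sum_congr rfl
  intro x _
  by_cases hx : 0 < margX p x
  · rw [if_pos hx, iInf_klDiv_CYhull_eq_zero h0 hk hx, EReal.toReal_zero, sub_zero,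
      klDiv_condX_margZ_toReal h0 hx]
  · rw [if_neg hx]
    have hx0 : margX p x = 0 := le_antisymm (not_lt.mp hx) (margX_nonneg h0 x)
    symm
    apply Finset.sum_eq_zero
    intro z _
    have : margXZ p x z = 0 :=
      le_antisymm (hx0 ▸ margXZ_le_margX h0 x z) (margXZ_nonneg h0 x z)
    rw [this, zero_mul]

lemma miZXY_eq_miZY (h0 : ∀ a, 0 ≤ p a)
    (hk : ∀ x y z, p (x, y, z) * margY p y = margXY p x y * margYZ p y z) :
    miZXY p = miZY p := by
  unfold miZXY miZY
  rw [Finset.sum_comm]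
  apply Finset.sum_congr rfl
  intro y _
  have hterm : ∀ x z, p (x, y, z) * Real.log (p (x, y, z) / (margXY p x y * margZ p z))
      = p (x, y, z) * Real.log (margYZ p y z / (margY p y * margZ p z)) := by
    intro x z
    rcases (h0 (x, y, z)).lt_or_eq with hpz | hpz
    · have hxy : 0 < margXY p x y := hpz.trans_le (p_le_margXY h0 x y z)
      have hy : 0 < margY p y := hxy.trans_le (margXY_le_margY h0 x y)
      have hratio : p (x, y, z) / margXY p x y = margYZ p y z / margY p y := by
        rw [div_eq_div_iff hxy.ne' hy.ne']
        linarith [hk x y z]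
      rw [← div_div, ← div_div, hratio]
    · rw [← hpz, zero_mul, zero_mul]
  calc ∑ x, ∑ z, p (x, y, z) * Real.log (p (x, y, z) / (margXY p x y * margZ p z))
      = ∑ x, ∑ z, p (x, y, z) * Real.log (margYZ p y z / (margY p y * margZ p z)) := by
        exact Finset.sum_congr rfl fun x _ => Finset.sum_congr rfl fun z _ => hterm x z
    _ = ∑ z, ∑ x, p (x, y, z) * Real.log (margYZ p y z / (margY p y * margZ p z)) :=
        Finset.sum_comm
    _ = ∑ z, margYZ p y z * Real.log (margYZ p y z / (margY p y * margZ p z)) := by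
        apply Finset.sum_congr rfl
        intro z _
        rw [← Finset.sum_mul]
        rfl

end Main

section Hard

variable {𝓧' 𝓨' 𝓩' : Type*} [Fintype 𝓧'] [Fintype 𝓨'] [Fintype 𝓩']
variable {p : 𝓧' × 𝓨' × 𝓩' → ℝ}

lemma miZX_le_IprYX (h0 : ∀ a, 0 ≤ p a)
    (hk : ∀ x y z, p (x, y, z) * margY p y = margXY p x y * margYZ p y z) :
    miZX p ≤ IprYX p := by
  classical
  -- rewrite miZX as a sum over y of T y
  set L : 𝓧' → 𝓩' → ℝ := fun x z => Real.log (margXZ p x z / (margX p x * margZ p z)) with hL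
  set T : 𝓨' → ℝ := fun y => ∑ x, ∑ z, p (x, y, z) * L x z with hT
  have hmi : miZX p = ∑ y, T y := by
    unfold miZX
    calc ∑ x, ∑ z, margXZ p x z * L x z
        = ∑ x, ∑ z, ∑ y, p (x, y, z) * L x z := by
          apply Finset.sum_congr rfl; intro x _
          apply Finset.sum_congr rfl; intro z _
          rw [← Finset.sum_mul]; rfl
      _ = ∑ x, ∑ y, ∑ z, p (x, y, z) * L x z := by
          apply Finset.sum_congr rfl; intro x _; exact Finset.sum_comm
      _ = ∑ y, T y := Finset.sum_comm
  rw [hmi]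
  unfold IprYX
  apply Finset.sum_le_sum
  intro y _
  by_cases hy : 0 < margY p y
  swap
  · rw [if_neg hy]
    have hy0 : margY p y = 0 := le_antisymm (not_lt.mp hy) (margY_nonneg h0 y)
    have : T y = 0 := by
      apply Finset.sum_eq_zero
      intro x _
      apply Finset.sum_eq_zero
      intro z _
      have hpz : p (x, y, z) = 0 := by
        have h1 : p (x, y, z) ≤ margY p y :=
          (p_le_margXY h0 x y z).trans (margXY_le_margY h0 x y)
        exact le_antisymm (hy0 ▸ h1) (h0 _)
      rw [hpz, zero_mul]
    rw [this]
  rw [if_pos hy]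
  -- definitions for this y
  set A : 𝓧' → ℝ := fun x => ∑ z, condY p y z * Real.log (condY p y z / condX p x z) with hA
  set w : 𝓧' → ℝ := fun x => margXY p x y with hw
  have hwsum : ∑ x, w x = margY p y := rfl
  set avg : ℝ := (∑ x, w x * A x) / margY p y with havg
  -- the conditional of Y given y vs margZ
  have hcondY_pos : ∀ z, 0 < condY p y z → 0 < margYZ p y z := by
    intro z hz
    by_contra hcon
    have : margYZ p y z = 0 := le_antisymm (not_lt.mp hcon) (margYZ_nonneg h0 y z)
    rw [condY, this, zero_div] at hz
    exact lt_irrefl 0 hz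
  have hDy : klDiv (condY p y) (margZ p)
      = ((∑ z, condY p y z * Real.log (condY p y z / margZ p z) : ℝ) : EReal) := by
    apply klDiv_eq_coe
    intro z hz
    exact (hcondY_pos z hz).trans_le (margYZ_le_margZ h0 y z)
  set Dy : ℝ := ∑ z, condY p y z * Real.log (condY p y z / margZ p z) with hDydef
  -- find x0 with positive weight and A x0 ≤ avg
  set S : Finset 𝓧' := Finset.univ.filter (fun x => 0 < w x) with hS
  have hSsum : ∀ f : 𝓧' → ℝ, (∑ x ∈ S, w x * f x) = ∑ x, w x * f x := by
    intro f
    rw [hS, Finset.sum_filter_of_ne]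
    intro x _ hne
    have : w x ≠ 0 := fun h => hne (by rw [h, zero_mul])
    exact (margXY_nonneg h0 x y).lt_of_ne' this
  have hSne : S.Nonempty := by
    obtain ⟨x, _, hx⟩ := Finset.exists_lt_of_sum_lt
      (f := fun _ : 𝓧' => (0:ℝ)) (g := w) (s := Finset.univ) (by simpa [hwsum] using hy)
    exact ⟨x, Finset.mem_filter.mpr ⟨Finset.mem_univ x, hx⟩⟩
  have hsums : ∑ x ∈ S, w x * A x ≤ ∑ x ∈ S, w x * avg := by
    have h1 : ∑ x ∈ S, w x * avg = (∑ x ∈ S, w x) * avg := by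
      rw [Finset.sum_mul]
    have h2 : ∑ x ∈ S, w x = margY p y := by
      have := hSsum (fun _ => 1)
      simpa [hwsum] using this
    rw [hSsum A, h1, h2, havg, mul_div_cancel₀ _ hy.ne']
  obtain ⟨x0, hx0S, hx0le⟩ := Finset.exists_le_of_sum_le hSne hsums
  have hwx0 : 0 < w x0 := (Finset.mem_filter.mp hx0S).2
  have hAx0 : A x0 ≤ avg := le_of_mul_le_mul_left hx0le hwx0
  have hx0X : 0 < margX p x0 := hwx0.trans_le (margXY_le_margX h0 x0 y)
  -- klDiv (condY p y) (condX p x0) is finite and equals A x0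
  have hklA : klDiv (condY p y) (condX p x0) = ((A x0 : ℝ) : EReal) := by
    apply klDiv_eq_coe
    intro z hz
    have hyz : 0 < margYZ p y z := hcondY_pos z hz
    have hpz : 0 < p (x0, y, z) := by
      have := hk x0 y z
      nlinarith [margXY_nonneg h0 x0 y, hwx0, hyz, hy]
    have hxz : 0 < margXZ p x0 z := hpz.trans_le (p_le_margXZ h0 x0 y z)
    exact div_pos hxz hx0X
  -- bound the infimum
  set inf : EReal := ⨅ q ∈ CXhull p, klDiv (condY p y) q with hinf
  have hinf_le : inf ≤ ((A x0 : ℝ) : EReal) := by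
    have hmemX : condX p x0 ∈ {q : 𝓩' → ℝ | ∃ x', 0 < margX p x' ∧ q = condX p x'} :=
      ⟨x0, hx0X, rfl⟩
    calc inf ≤ klDiv (condY p y) (condX p x0) :=
        iInf₂_le _ (subset_convexHull ℝ _ hmemX)
      _ = _ := hklA
  have hinf_nonneg : (0 : EReal) ≤ inf := by
    refine le_iInf₂ fun q hq => ?_
    obtain ⟨hq0, hq1⟩ := pmf_of_mem_CXhull h0 hq
    exact klDiv_nonneg (condY_nonneg h0 y) (condY_sum hy) hq0 hq1.le
  have hinf_toReal : inf.toReal ≤ A x0 := by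
    have hne : inf ≠ ⊥ := by
      intro hbot
      rw [hbot] at hinf_nonneg
      exact absurd hinf_nonneg (by simp)
    have := EReal.toReal_le_toReal hinf_le hne (EReal.coe_ne_top _)
    rwa [EReal.toReal_coe] at this
  have hinf_le_avg : inf.toReal ≤ avg := hinf_toReal.trans hAx0
  -- final per-y computation : T y = margY p y * Dy - ∑ x, w x * A x
  have hTy : T y = margY p y * Dy - ∑ x, w x * A x := by
    have hwc : ∀ x z, w x * condY p y z = p (x, y, z) := by
      intro x z
      rw [hw]
      unfold condY
      rw [mul_div_assoc', div_eq_iff hy.ne']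
      exact (hk x y z).symm
    have h1 : margY p y * Dy
        = ∑ x, ∑ z, p (x, y, z) * Real.log (condY p y z / margZ p z) := by
      rw [hDydef, Finset.mul_sum]
      calc ∑ z, margY p y * (condY p y z * Real.log (condY p y z / margZ p z))
          = ∑ z, margYZ p y z * Real.log (condY p y z / margZ p z) := by
            apply Finset.sum_congr rfl
            intro z _
            rw [← mul_assoc]
            congr 1
            unfold condY
            rw [mul_div_assoc', mul_comm, mul_div_assoc, div_self hy.ne', mul_one]
        _ = ∑ z, ∑ x, p (x, y, z) * Real.log (condY p y z / margZ p z) := by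
            apply Finset.sum_congr rfl
            intro z _
            rw [← Finset.sum_mul]
            rfl
        _ = _ := Finset.sum_comm
    have h2 : ∑ x, w x * A x
        = ∑ x, ∑ z, p (x, y, z) * Real.log (condY p y z / condX p x z) := by
      apply Finset.sum_congr rfl
      intro x _
      rw [hA, Finset.mul_sum]
      apply Finset.sum_congr rfl
      intro z _
      rw [← mul_assoc, hwc x z]
    rw [h1, h2, ← Finset.sum_sub_distrib]
    apply Finset.sum_congr rfl
    intro x _
    rw [← Finset.sum_sub_distrib]
    apply Finset.sum_congr rfl
    intro z _
    rw [← mul_sub]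
    rcases (h0 (x, y, z)).lt_or_eq with hpz | hpz
    · have hyz : 0 < margYZ p y z := hpz.trans_le (by
        rw [show margYZ p y z = ∑ x', p (x', y, z) from rfl]
        exact Finset.single_le_sum (fun x' _ => h0 (x', y, z)) (Finset.mem_univ x))
      have hcY : 0 < condY p y z := div_pos hyz hy
      have hmZ : 0 < margZ p z := hyz.trans_le (margYZ_le_margZ h0 y z)
      have hxz : 0 < margXZ p x z := hpz.trans_le (p_le_margXZ h0 x y z)
      have hX : 0 < margX p x := hxz.trans_le (margXZ_le_margX h0 x z)
      have hcX : 0 < condX p x z := div_pos hxz hX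
      congr 1
      simp only [hL]
      rw [Real.log_div hcY.ne' hmZ.ne', Real.log_div hcY.ne' hcX.ne']
      have hdd : margXZ p x z / (margX p x * margZ p z) = condX p x z / margZ p z := by
        rw [← div_div]; rfl
      rw [hdd, Real.log_div hcX.ne' hmZ.ne']
      ring
    · rw [← hpz, zero_mul, zero_mul]
  -- conclude
  have hstep : margY p y * (Dy - avg) ≤ margY p y * (Dy - inf.toReal) :=
    mul_le_mul_of_nonneg_left (by linarith) hy.le
  have havg_eq : margY p y * avg = ∑ x, w x * A x := by
    rw [havg, mul_div_cancel₀ _ hy.ne']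
  calc T y = margY p y * Dy - ∑ x, w x * A x := hTy
    _ = margY p y * (Dy - avg) := by rw [mul_sub, havg_eq]
    _ ≤ margY p y * (Dy - inf.toReal) := hstep
    _ = margY p y * ((klDiv (condY p y) (margZ p)).toReal - inf.toReal) := by
        rw [hDy, EReal.toReal_coe]
end Hard


/-- Vanishing state-dependent transfer entropy under conditional independence:
if `p(z|x,y) = p(z|y)` for all `(x,y)` with `p(x,y) > 0`, then `I_pr(X↘Y;Z) = I(Z;X)`
and the synergistic partial information vanishes:
`I(Z;X,Y) − I(Z;X) − I(Z;Y) + I_red(Z;X,Y) = 0`. -/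
theorem synergy_vanishes_of_condIndep
    [Nonempty 𝓧] [Nonempty 𝓨] [Nonempty 𝓩]
    (p : 𝓧 × 𝓨 × 𝓩 → ℝ) (hp : IsPMF p)
    (hci : ∀ x y, 0 < margXY p x y → ∀ z, condXY p x y z = condY p y z) :
    IprXY p = miZX p ∧
      miZXY p - miZX p - miZY p + Ired p = 0 := by
  obtain ⟨h0, _hp1⟩ := hp
  have hk : ∀ x y z, p (x, y, z) * margY p y = margXY p x y * margYZ p y z :=
    markov_key h0 hci
  have h1 : IprXY p = miZX p := IprXY_eq_miZX h0 hk
  have h2 : miZXY p = miZY p := miZXY_eq_miZY h0 hk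
  have h3 : miZX p ≤ IprYX p := miZX_le_IprYX h0 hk
  refine ⟨h1, ?_⟩
  have h4 : Ired p = miZX p := by
    unfold Ired
    rw [h1]
    exact min_eq_left h3
  rw [h2, h4]
  ring
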